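/- Let X be countable, φ a stationary policy with transition-rate matrix Q_φ satisfying ‖Σ_{n=0}^∞ Q_φⁿ‖ ≤ K, let c be a bounded cost function, and let μ : X → [1, K] satisfy μ(x) ≥ 1 + Σ_y q(y|x,a)μ(y) for all x, a. Fix β̃ ∈ [(K−1)/K, 1) and define the transformed model on X̃ = X ∪ {x̃} with an absorbing cost-free state x̃, costs c̃(x,a) = c(x,a)/μ(x), and transition probabilities p̃(y|x,a) = q(y|x,a)μ(y)/(β̃ μ(x)) for x,y ∈ X, p̃(x̃|x,a) = 1 − (1/(β̃ μ(x))) Σ_{y∈X} q(y|x,a)μ(y), p̃(x̃|x̃,ã) = 1. Then for all x ∈ X and n ≥ 0, β̃ⁿ P̃_φⁿ c̃_φ(x) = μ(x)⁻¹ Q_φⁿ c_φ(x), and consequently the total cost v^φ(x) := Σ_{n=0}^∞ Q_φⁿ c_φ(x) equals μ(x) · ṽ_β̃^φ(x), where ṽ_β̃^φ(x) := Σ_{n=0}^∞ β̃ⁿ P̃_φⁿ c̃_φ(x). -/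
import Mathlib


/-- Iterated application of a real matrix to a function: `iterR P f n = Pⁿ f`. -/
noncomputable def iterR {X : Type*} (P : X → X → ℝ) (f : X → ℝ) : ℕ → X → ℝ
  | 0 => f
  | n + 1 => fun x => ∑' y, P x y * iterR P f n y

lemma iterR_zero {X : Type*} (P : X → X → ℝ) (f : X → ℝ) : iterR P f 0 = f := rfl

lemma iterR_succ {X : Type*} (P : X → X → ℝ) (f : X → ℝ) (n : ℕ) (x : X) :
    iterR P f (n + 1) x = ∑' y, P x y * iterR P f n y := by
  rw [iterR]

theorem hv_aux {X : Type*} (Q : X → X → ℝ) (hQ0 : ∀ x y, 0 ≤ Q x y)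
    (hQs : ∀ x, Summable (Q x)) (c0 : X → ℝ)
    (K : ℝ) (hK : 1 ≤ K)
    (hTs : ∀ x, Summable fun n => iterR Q (fun _ => (1 : ℝ)) n x)
    (hT : ∀ x, ∑' n : ℕ, iterR Q (fun _ => (1 : ℝ)) n x ≤ K)
    (μ : X → ℝ) (hμ1 : ∀ x, 1 ≤ μ x)
    (β : ℝ) (hβl : (K - 1) / K ≤ β)
    (Pt : Option X → Option X → ℝ)
    (hPtss : ∀ x y, Pt (some x) (some y) = Q x y * μ y / (β * μ x))
    (hPtnn : Pt none none = 1)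
    (hPtns : ∀ y : X, Pt none (some y) = 0)
    (ct : Option X → ℝ)
    (hcts : ∀ x, ct (some x) = c0 x / μ x) (hctn : ct none = 0) :
    (∀ (n : ℕ) (x : X), β ^ n * iterR Pt ct n (some x) = (μ x)⁻¹ * iterR Q c0 n x) ∧
    (∀ x : X, (∑' n : ℕ, iterR Q c0 n x)
        = μ x * ∑' n : ℕ, β ^ n * iterR Pt ct n (some x)) := by
  have hμpos : ∀ x, (0:ℝ) < μ x := fun x => lt_of_lt_of_le one_pos (hμ1 x)
  have hμne : ∀ x, μ x ≠ 0 := fun x => ne_of_gt (hμpos x)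
  -- the absorbing state stays at cost 0
  have hnone : ∀ n, iterR Pt ct n none = 0 := by
    intro n
    induction n with
    | zero => exact hctn
    | succ n ih =>
      rw [iterR_succ]
      have h : ∀ y : Option X, Pt none y * iterR Pt ct n y = 0 := by
        intro y
        cases y with
        | none => rw [ih, mul_zero]
        | some z => rw [hPtns, zero_mul]
      simp only [h, tsum_zero]
  have key : ∀ (n : ℕ) (x : X),
      β ^ n * iterR Pt ct n (some x) = (μ x)⁻¹ * iterR Q c0 n x := by
    rcases eq_or_ne β 0 with hβ0 | hβ0
    · -- degenerate case β = 0, then K = 1 and Q ≡ 0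
      have hKpos : (0:ℝ) < K := lt_of_lt_of_le one_pos hK
      have hq : ∀ x y, Q x y = 0 := by
        intro x y
        have hK1 : K ≤ 1 := by
          have h1 : (K - 1) / K ≤ 0 := hβ0 ▸ hβl
          have h2 : (K - 1) / K * K ≤ 0 * K :=
            mul_le_mul_of_nonneg_right h1 hKpos.le
          rw [div_mul_cancel₀ _ (ne_of_gt hKpos), zero_mul] at h2
          linarith
        have hnn : ∀ n z, 0 ≤ iterR Q (fun _ => (1:ℝ)) n z := by
          intro n
          induction n with
          | zero => intro z; norm_num [iterR]
          | succ n ih =>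
            intro z
            exact tsum_nonneg fun w => mul_nonneg (hQ0 _ _) (ih w)
        have h01 : iterR Q (fun _ => (1:ℝ)) 0 x + iterR Q (fun _ => (1:ℝ)) 1 x
            ≤ ∑' n, iterR Q (fun _ => (1:ℝ)) n x := by
          have := Summable.sum_le_tsum ({0, 1} : Finset ℕ) (fun n _ => hnn n x) (hTs x)
          simpa using this
        have hz : iterR Q (fun _ => (1:ℝ)) 0 x = 1 := by rw [iterR_zero]
        have h1le : iterR Q (fun _ => (1:ℝ)) 1 x ≤ 0 := by
          have := hT x
          rw [hz] at h01
          linarith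
        have h1eq : (∑' y, Q x y * (1:ℝ)) = 0 := by
          have hge : (0:ℝ) ≤ ∑' y, Q x y * (1:ℝ) :=
            tsum_nonneg fun w => mul_nonneg (hQ0 _ _) zero_le_one
          have heq : iterR Q (fun _ => (1:ℝ)) 1 x = ∑' y, Q x y * (1:ℝ) := by
            rw [iterR_succ]
            exact tsum_congr fun y => by rw [iterR_zero]
          rw [heq] at h1le
          linarith
        have hsum : Summable (fun y => Q x y * (1:ℝ)) := by
          simpa using hQs x
        have hle : Q x y * (1:ℝ) ≤ ∑' z, Q x z * (1:ℝ) :=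
          Summable.le_tsum hsum y fun j _ => mul_nonneg (hQ0 _ _) zero_le_one
        rw [h1eq] at hle
        have := hQ0 x y
        nlinarith
      intro n x
      cases n with
      | zero =>
        rw [pow_zero, one_mul, iterR_zero, iterR_zero, hcts, div_eq_inv_mul]
      | succ n =>
        rw [hβ0, zero_pow (Nat.succ_ne_zero n), zero_mul]
        have h : ∀ y : X, Q x y * iterR Q c0 n y = 0 := by
          intro y
          rw [hq x y, zero_mul]
        rw [iterR_succ]
        simp only [h, tsum_zero, mul_zero]
    · -- main case β ≠ 0
      intro n
      induction n with
      | zero =>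
        intro x
        rw [pow_zero, one_mul, iterR_zero, iterR_zero, hcts, div_eq_inv_mul]
      | succ n ih =>
        intro x
        have h1 : (∑' y : Option X, Pt (some x) y * iterR Pt ct n y)
            = ∑' y : X, Pt (some x) (some y) * iterR Pt ct n (some y) := by
          refine (Function.Injective.tsum_eq (Option.some_injective X) ?_).symm
          intro y hy
          cases y with
          | none =>
            refine absurd ?_ hy
            show Pt (some x) none * iterR Pt ct n none = 0
            rw [hnone n, mul_zero]
          | some z => exact ⟨z, rfl⟩
        have h2 : ∀ y : X,
            β ^ (n + 1) * (Pt (some x) (some y) * iterR Pt ct n (some y))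
            = (μ x)⁻¹ * (Q x y * iterR Q c0 n y) := by
          intro y
          have hβn : β ^ n ≠ 0 := pow_ne_zero _ hβ0
          have hiy : iterR Pt ct n (some y)
              = (β ^ n)⁻¹ * ((μ y)⁻¹ * iterR Q c0 n y) := by
            rw [← ih y, ← mul_assoc, inv_mul_cancel₀ hβn, one_mul]
          have hrearr : β ^ n * β *
              (Q x y * μ y / (β * μ x) * ((β ^ n)⁻¹ * ((μ y)⁻¹ * iterR Q c0 n y)))
              = (β ^ n * (β ^ n)⁻¹) * (β * β⁻¹) * (μ y * (μ y)⁻¹) *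
                ((μ x)⁻¹ * (Q x y * iterR Q c0 n y)) := by
            rw [div_eq_mul_inv, mul_inv]
            ring
          rw [hPtss, hiy, pow_succ, hrearr, mul_inv_cancel₀ hβn, mul_inv_cancel₀ hβ0,
            mul_inv_cancel₀ (hμne y), one_mul, one_mul, one_mul]
        calc β ^ (n + 1) * iterR Pt ct (n + 1) (some x)
            = β ^ (n + 1) * ∑' y : X, Pt (some x) (some y) * iterR Pt ct n (some y) := by
              rw [iterR_succ, h1]
          _ = ∑' y : X, β ^ (n + 1) * (Pt (some x) (some y) * iterR Pt ct n (some y)) :=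
              tsum_mul_left.symm
          _ = ∑' y : X, (μ x)⁻¹ * (Q x y * iterR Q c0 n y) := tsum_congr h2
          _ = (μ x)⁻¹ * ∑' y : X, Q x y * iterR Q c0 n y := tsum_mul_left
          _ = (μ x)⁻¹ * iterR Q c0 (n + 1) x := by rw [iterR_succ]
  refine ⟨key, fun x => ?_⟩
  have h : ∀ n : ℕ, iterR Q c0 n x = μ x * (β ^ n * iterR Pt ct n (some x)) := by
    intro n
    rw [key n x, ← mul_assoc, mul_inv_cancel₀ (hμne x), one_mul]
  calc (∑' n : ℕ, iterR Q c0 n x)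
      = ∑' n : ℕ, μ x * (β ^ n * iterR Pt ct n (some x)) := tsum_congr h
    _ = μ x * ∑' n : ℕ, β ^ n * iterR Pt ct n (some x) := tsum_mul_left

/-- Proposition 2, HV transformation: for a transient stationary policy `φ`
with `‖∑ₙ Q_φⁿ‖ ≤ K`, bounded costs, `μ : X → [1,K]` with
`μ(x) ≥ 1 + ∑_y q(y|x,a) μ(y)`, and discount `β̃ ∈ [(K-1)/K, 1)`, the HV-transformed
model satisfies `β̃ⁿ P̃_φⁿ c̃_φ(x) = μ(x)⁻¹ Q_φⁿ c_φ(x)` and hence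
`v^φ(x) = μ(x) · ṽ_β̃^φ(x)`. -/
theorem stmt4 {X A : Type*} [Countable X]
    (q : X → A → X → ℝ) (hq0 : ∀ x a y, 0 ≤ q x a y) (hqs : ∀ x a, Summable (q x a))
    (c : X → A → ℝ) (C : ℝ) (hc : ∀ x a, |c x a| ≤ C)
    (φ : X → A) (K : ℝ) (hK : 1 ≤ K)
    (hTs : ∀ x, Summable fun n => iterR (fun x y => q x (φ x) y) (fun _ => (1 : ℝ)) n x)
    (hT : ∀ x, ∑' n : ℕ, iterR (fun x y => q x (φ x) y) (fun _ => (1 : ℝ)) n x ≤ K)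
    (μ : X → ℝ) (hμ1 : ∀ x, 1 ≤ μ x) (hμK : ∀ x, μ x ≤ K)
    (hμ : ∀ x a, 1 + ∑' y, q x a y * μ y ≤ μ x)
    (β : ℝ) (hβl : (K - 1) / K ≤ β) (hβu : β < 1) :
    letI Qφ : X → X → ℝ := fun x y => q x (φ x) y
    letI cφ : X → ℝ := fun x => c x (φ x)
    letI Pt : Option X → Option X → ℝ := fun x y =>
      match x, y with
      | some x, some y => q x (φ x) y * μ y / (β * μ x)
      | some x, none => 1 - (∑' z, q x (φ x) z * μ z) / (β * μ x)
      | none, some _ => 0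
      | none, none => 1
    letI ct : Option X → ℝ := fun x =>
      match x with
      | some x => c x (φ x) / μ x
      | none => 0
    (∀ (n : ℕ) (x : X), β ^ n * iterR Pt ct n (some x) = (μ x)⁻¹ * iterR Qφ cφ n x) ∧
    (∀ x : X, (∑' n : ℕ, iterR Qφ cφ n x)
        = μ x * ∑' n : ℕ, β ^ n * iterR Pt ct n (some x)) := by
  exact hv_aux _ (fun x y => hq0 x (φ x) y) (fun x => hqs x (φ x)) _ K hK hTs hT μ hμ1
    β hβl _ (fun _ _ => rfl) rfl (fun _ => rfl) _ (fun _ => rfl) rfl
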